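/- Let R be a discrete valuation ring with fraction field K, uniformizer π, and residue field κ = R/(π). Let f ∈ R[x,y,z] be a homogeneous polynomial of degree 3 whose reduction f̄ ∈ κ[x,y,z] has no nonzero zero in κ³. Then the only solution (w,x,y,z) ∈ K⁴ of the equation π w³ = f(x,y,z) is (0,0,0,0). (The cubic surface π w³ = f(x,y,z) in ℙ³_K has no K-rational points.) -/

import Mathlib

open MvPolynomial

lemma aux_eval_smul {σ R : Type*} [Fintype σ] [CommRing R] {f : MvPolynomial σ R} {n : ℕ}
    (hf : f.IsHomogeneous n) (c : R) (x : σ → R) :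
    eval (fun i => c * x i) f = c ^ n * eval x f := by
  rw [eval_eq, eval_eq, Finset.mul_sum]
  refine Finset.sum_congr rfl fun d hd => ?_
  have hw : ∑ i ∈ d.support, d i = n := by
    have := hf (mem_support_iff.mp hd)
    simpa [Finsupp.weight, Finsupp.linearCombination, Finsupp.sum] using this
  rw [← hw]
  rw [Finset.prod_congr rfl (fun i _ => mul_pow c (x i) (d i)), Finset.prod_mul_distrib,
    Finset.prod_pow_eq_pow_sum]
  ring

lemma aux_eval_comm {σ R S : Type*} [CommRing R] [CommRing S] (φ : R →+* S)
    (b : σ → R) (f : MvPolynomial σ R) :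
    eval (fun i => φ (b i)) (MvPolynomial.map φ f) = φ (eval b f) := by
  rw [eval_map]
  simpa using (map_eval₂Hom (RingHom.id R) b φ f).symm

-- descent step
lemma aux_descent {R : Type} [CommRing R] [IsDomain R]
    (π : R) (hπ : Irreducible π) (hprime : Prime π)
    (f : MvPolynomial (Fin 3) R) (hdeg : f.IsHomogeneous 3)
    (hred : ∀ u : Fin 3 → (R ⧸ Ideal.span {π}), u ≠ 0 →
      eval u (MvPolynomial.map (Ideal.Quotient.mk (Ideal.span {π})) f) ≠ 0)
    (a : R) (b : Fin 3 → R) (h : π * a ^ 3 = eval b f) :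
    ∃ a' : R, ∃ b' : Fin 3 → R, a = π * a' ∧ (∀ i, b i = π * b' i) ∧
      π * a' ^ 3 = eval b' f := by
  have hb : ∀ i, π ∣ b i := by
    by_contra hcon
    push_neg at hcon
    obtain ⟨i, hi⟩ := hcon
    have hu : (fun j => Ideal.Quotient.mk (Ideal.span {π}) (b j)) ≠ 0 := by
      intro h0
      apply hi
      have := congrFun h0 i
      simpa [Ideal.Quotient.eq_zero_iff_mem, Ideal.mem_span_singleton] using this
    apply hred _ hu
    rw [aux_eval_comm, ← h]
    rw [Ideal.Quotient.eq_zero_iff_mem]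
    exact Ideal.mul_mem_right _ _ (Ideal.subset_span rfl)
  choose b' hb' using hb
  have hfb : eval b f = π ^ 3 * eval b' f := by
    have : b = fun i => π * b' i := funext hb'
    rw [this, aux_eval_smul hdeg]
  have hπ0 : π ≠ 0 := hπ.ne_zero
  have ha3 : a ^ 3 = π ^ 2 * eval b' f := by
    have : π * a ^ 3 = π * (π ^ 2 * eval b' f) := by rw [h, hfb]; ring
    exact mul_left_cancel₀ hπ0 this
  have hdvd : π ∣ a := by
    have : π ∣ a ^ 3 := ⟨π * eval b' f, by rw [ha3]; ring⟩
    exact hprime.dvd_of_dvd_pow this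
  obtain ⟨a', ha'⟩ := hdvd
  refine ⟨a', b', ha', hb', ?_⟩
  have : π ^ 2 * (π * a' ^ 3) = π ^ 2 * eval b' f := by
    rw [← ha3, ha']; ring
  exact mul_left_cancel₀ (pow_ne_zero 2 hπ0) this

lemma aux_zero {R : Type} [CommRing R] [IsDomain R] [IsDiscreteValuationRing R]
    (π : R) (hπ : Irreducible π) (a : R) (h : ∀ n : ℕ, π ^ n ∣ a) : a = 0 := by
  by_contra ha
  obtain ⟨n, u, hu⟩ := IsDiscreteValuationRing.eq_unit_mul_pow_irreducible ha hπ
  obtain ⟨c, hc⟩ := hu ▸ h (n + 1)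
  have hπ0 : π ^ n ≠ 0 := pow_ne_zero n hπ.ne_zero
  have hu' : (u : R) = π * c := by
    apply mul_left_cancel₀ hπ0
    linear_combination hc
  exact hπ.not_isUnit (isUnit_of_mul_isUnit_left (hu' ▸ u.isUnit))

/-- Let `R` be a DVR with fraction field `K`, uniformizer `π` and residue field
`κ = R/(π)`. If `f` is a cubic form over `R` whose reduction mod `π` has no nonzero zero
over `κ`, then the only solution in `K⁴` of `π w³ = f(x, y, z)` is the zero solution. -/
theorem no_rational_point_pi_w_cubed_eq_cubic
    (R : Type) [CommRing R] [IsDomain R] [IsDiscreteValuationRing R]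
    (K : Type) [Field K] [Algebra R K] [IsFractionRing R K]
    (π : R) (hπ : Irreducible π)
    (f : MvPolynomial (Fin 3) R) (hdeg : f.IsHomogeneous 3)
    (hred : ∀ u : Fin 3 → (R ⧸ Ideal.span {π}), u ≠ 0 →
      eval u (MvPolynomial.map (Ideal.Quotient.mk (Ideal.span {π})) f) ≠ 0)
    (w : K) (v : Fin 3 → K)
    (heq : algebraMap R K π * w ^ 3 = eval v (MvPolynomial.map (algebraMap R K) f)) :
    w = 0 ∧ v = 0 := by
  have hprime : Prime π := hπ.prime
  set g : Fin 4 → K := Fin.cons w (fun i => v i) with hg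
  obtain ⟨d, hd⟩ := IsLocalization.exist_integer_multiples_of_finite
    (nonZeroDivisors R) g
  choose r hr using hd
  set a : R := r 0 with ha
  set b : Fin 3 → R := fun i => r i.succ with hb
  have hdK : algebraMap R K (d : R) ≠ 0 :=
    IsFractionRing.to_map_ne_zero_of_mem_nonZeroDivisors d.2
  have hinj : Function.Injective (algebraMap R K) := IsFractionRing.injective R K
  have hr0 : algebraMap R K a = (d : R) • w := by simpa [hg] using hr 0
  have hrs : ∀ i : Fin 3, algebraMap R K (b i) = (d : R) • v i := by
    intro i; simpa [hg, Fin.cons_succ] using hr i.succ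
  have hint : π * a ^ 3 = eval b f := by
    apply hinj
    rw [map_mul, map_pow, hr0, ← aux_eval_comm (algebraMap R K) b f]
    have h2 : (fun i => algebraMap R K (b i)) = fun i => algebraMap R K (d : R) * v i := by
      funext i; rw [hrs i]; simp [Algebra.smul_def]
    rw [h2, aux_eval_smul (hdeg.map (algebraMap R K)) (algebraMap R K (d : R)) v, ← heq]
    simp only [Algebra.smul_def]
    ring
  have hdesc : ∀ n : ℕ, ∀ a : R, ∀ b : Fin 3 → R, π * a ^ 3 = eval b f →
      π ^ n ∣ a ∧ ∀ i, π ^ n ∣ b i := by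
    intro n
    induction n with
    | zero => intro a b _; simp
    | succ n ih =>
      intro a b h
      obtain ⟨a', b', ha', hb', h'⟩ := aux_descent π hπ hprime f hdeg hred a b h
      obtain ⟨ha'', hb''⟩ := ih a' b' h'
      have hps : π ^ (n + 1) = π * π ^ n := by ring
      constructor
      · rw [ha', hps]; exact mul_dvd_mul_left π ha''
      · intro i; rw [hb' i, hps]; exact mul_dvd_mul_left π (hb'' i)
  have haz : a = 0 := aux_zero π hπ a (fun n => (hdesc n a b hint).1)
  have hbz : ∀ i, b i = 0 := fun i => aux_zero π hπ (b i) (fun n => (hdesc n a b hint).2 i)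
  constructor
  · have : algebraMap R K (d : R) * w = 0 := by
      rw [← Algebra.smul_def, ← hr0, haz, map_zero]
    rcases mul_eq_zero.mp this with h | h
    · exact absurd h hdK
    · exact h
  · funext i
    have : algebraMap R K (d : R) * v i = 0 := by
      rw [← Algebra.smul_def, ← hrs i, hbz i, map_zero]
    rcases mul_eq_zero.mp this with h | h
    · exact absurd h hdK
    · exact h
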